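/- Let m ≥ 2 be an integer and let g : [0,1] → [0,1] satisfy m·g(x) − g(x)^m − x(m−1) = 0 for all x ∈ [0,1], with g(0) = 0. Then g is the pointwise limit, uniquely determined by this equation, and its power series coefficients p_k (i.e., g(x) = ∑_{k≥1} p_k x^k) are given by p_k = (1/k)·((m−1)/m)^k·(1/m)^{(k−1)/(m−1)}·C(m·(k−1)/(m−1), (k−1)/(m−1)) when (m−1) divides (k−1), and p_k = 0 otherwise. -/

import Mathlib

/-- The coefficients of the limiting stationary cluster size distribution:
`p_k = (1/k)((m−1)/m)^k (1/m)^{(k−1)/(m−1)} C(m(k−1)/(m−1), (k−1)/(m−1))` when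
`(m−1) ∣ (k−1)`, and `0` otherwise. -/
noncomputable def pcoef (m k : ℕ) : ℝ :=
  if (m - 1) ∣ (k - 1) then
    (1 / (k : ℝ)) * (((m : ℝ) - 1) / m) ^ k * ((1 : ℝ) / m) ^ ((k - 1) / (m - 1)) *
      (Nat.choose (m * ((k - 1) / (m - 1))) ((k - 1) / (m - 1)) : ℝ)
  else 0


noncomputable def fc (m a n : ℕ) : ℝ :=
  if n = 0 then 1 else ((a : ℝ) / ((a : ℝ) + n * m)) * (Nat.choose (a + n * m) n : ℝ)

lemma fc_zero (m a : ℕ) : fc m a 0 = 1 := by simp [fc]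

lemma fc_zero_left (m n : ℕ) (hn : n ≠ 0) : fc m 0 n = 0 := by simp [fc, hn]

lemma fc_nonneg (m a n : ℕ) : 0 ≤ fc m a n := by
  unfold fc
  split
  · norm_num
  · positivity

lemma fc_apos (m a n : ℕ) (ha : 0 < a) :
    fc m a n = ((a : ℝ) / ((a : ℝ) + n * m)) * (Nat.choose (a + n * m) n : ℝ) := by
  unfold fc
  split
  · rename_i h
    subst h
    have h0 : (a:ℝ) ≠ 0 := by positivity
    simp [div_self h0]
  · rfl

set_option maxHeartbeats 1000000 in
lemma fc_pascal (m a n : ℕ) (hm : 1 ≤ m) :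
    fc m (a+1) (n+1) = fc m a (n+1) + fc m (a+m) n := by
  obtain ⟨N, hN⟩ : ∃ N, N = a + (n+1)*m := ⟨_, rfl⟩
  have hNn : n + 1 ≤ N := by nlinarith
  obtain ⟨d, hd⟩ : ∃ d, N = n + 1 + d := ⟨N - (n+1), by omega⟩
  have hNR : (N:ℝ) = (a:ℝ) + ((n:ℝ)+1) * m := by rw [hN]; push_cast; ring
  have e1 : fc m (a+1) (n+1) = ((a:ℝ)+1) / ((N:ℝ)+1) * (Nat.choose (N+1) (n+1) : ℝ) := by
    rw [fc_apos m (a+1) (n+1) (by omega), show a + 1 + (n+1)*m = N + 1 by rw [hN]; ring]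
    push_cast
    rw [hNR]
    ring
  have e2 : fc m a (n+1) = (a:ℝ) / (N:ℝ) * (Nat.choose N (n+1) : ℝ) := by
    rcases Nat.eq_zero_or_pos a with rfl | ha
    · rw [fc_zero_left m (n+1) (by omega)]; simp
    · rw [fc_apos m a (n+1) ha, show a + (n+1)*m = N from hN.symm]
      push_cast
      rw [hNR]
  have e3 : fc m (a+m) n = ((a:ℝ)+(m:ℝ)) / (N:ℝ) * (Nat.choose N n : ℝ) := by
    rw [fc_apos m (a+m) n (by omega), show a + m + n*m = N by rw [hN]; ring]
    push_cast
    rw [hNR]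
    ring
  rw [e1, e2, e3]
  have c1 : (Nat.choose (N+1) (n+1) : ℝ)
      = (Nat.factorial (N+1) : ℝ) / ((Nat.factorial (n+1) : ℝ) * (Nat.factorial (d+1) : ℝ)) := by
    rw [Nat.cast_choose ℝ (by omega : n + 1 ≤ N + 1), show N + 1 - (n+1) = d + 1 by omega]
  have c2 : (Nat.choose N (n+1) : ℝ)
      = (Nat.factorial N : ℝ) / ((Nat.factorial (n+1) : ℝ) * (Nat.factorial d : ℝ)) := by
    rw [Nat.cast_choose ℝ (by omega : n + 1 ≤ N), show N - (n+1) = d by omega]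
  have c3 : (Nat.choose N n : ℝ)
      = (Nat.factorial N : ℝ) / ((Nat.factorial n : ℝ) * (Nat.factorial (d+1) : ℝ)) := by
    rw [Nat.cast_choose ℝ (by omega : n ≤ N), show N - n = d + 1 by omega]
  rw [c1, c2, c3, Nat.factorial_succ N, Nat.factorial_succ n, Nat.factorial_succ d]
  have hNr : (N:ℝ) = (n:ℝ) + 1 + (d:ℝ) := by exact_mod_cast congrArg (Nat.cast (R := ℝ)) hd
  have har : (a:ℝ) = (N:ℝ) - ((n:ℝ)+1) * (m:ℝ) := by
    have h := congrArg (Nat.cast (R := ℝ)) hN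
    push_cast at h
    linarith
  have hfn : (0:ℝ) < (Nat.factorial n : ℝ) := by exact_mod_cast Nat.factorial_pos n
  have hfd : (0:ℝ) < (Nat.factorial d : ℝ) := by exact_mod_cast Nat.factorial_pos d
  have hfN : (0:ℝ) < (Nat.factorial N : ℝ) := by exact_mod_cast Nat.factorial_pos N
  have hNpos : (0:ℝ) < (N:ℝ) := by rw [hNr]; positivity
  push_cast
  rw [har, hNr]
  field_simp
  ring


lemma fc_one_succ (m n : ℕ) (hm : 1 ≤ m) : fc m 1 (n+1) = fc m m n := by
  have h := fc_pascal m 0 n hm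
  rw [fc_zero_left m (n+1) (by omega)] at h
  simpa using h

lemma fc_conv (m : ℕ) (hm : 1 ≤ m) :
    ∀ n a b, (∑ i ∈ Finset.range (n+1), fc m a i * fc m b (n-i)) = fc m (a+b) n := by
  intro n
  induction n using Nat.strong_induction_on with
  | _ n ih =>
    intro a b
    induction a with
    | zero =>
      rw [Finset.sum_eq_single 0]
      · simp [fc_zero]
      · intro i _ hne
        rw [fc_zero_left m i hne, zero_mul]
      · intro h
        exact absurd (Finset.mem_range.2 (by omega)) h
    | succ a iha =>
      rcases Nat.eq_zero_or_pos n with rfl | hn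
      · simp [fc_zero]
      obtain ⟨n', rfl⟩ : ∃ n', n = n'+1 := ⟨n-1, by omega⟩
      rw [Finset.sum_range_succ']
      -- ∑ i in range (n'+1), fc m (a+1) (i+1) * fc m b (n'+1-(i+1)) + fc m (a+1) 0 * fc m b (n'+1)
      have hsplit : ∀ i ∈ Finset.range (n'+1),
          fc m (a+1) (i+1) * fc m b (n'+1-(i+1))
            = fc m a (i+1) * fc m b (n'+1-(i+1)) + fc m (a+m) i * fc m b (n'-i) := by
        intro i hi
        rw [fc_pascal m a i hm, add_mul, show n'+1-(i+1) = n'-i by omega]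
      rw [Finset.sum_congr rfl hsplit, Finset.sum_add_distrib]
      have h2 : (∑ i ∈ Finset.range (n'+1), fc m (a+m) i * fc m b (n'-i)) = fc m (a+m+b) n' :=
        ih n' (by omega) (a+m) b
      have h1 : (∑ i ∈ Finset.range (n'+1), fc m a (i+1) * fc m b (n'+1-(i+1)))
          = fc m (a+b) (n'+1) - fc m a 0 * fc m b (n'+1) := by
        have := iha
        rw [Finset.sum_range_succ'] at this
        simp only [Nat.sub_zero] at this
        linarith
      rw [h1, h2, fc_zero, fc_zero]
      have := fc_pascal m (a+b) n' hm
      rw [show a+b+m = a+m+b by ring] at this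
      rw [show a+1+b = a+b+1 by ring, this]
      simp only [Nat.sub_zero, Nat.add_comm 1 n']
      ring


noncomputable def fQ (m : ℕ) (z : ℝ) (a N : ℕ) : ℝ := ∑ n ∈ Finset.range N, fc m a n * z^n

noncomputable def ft (m : ℕ) (z : ℝ) (a : ℕ) : ℝ := ∑' n : ℕ, fc m a n * z^n


section anal

variable (m : ℕ) (z : ℝ) (hm : 1 ≤ m) (hz0 : 0 ≤ z)

include hz0 in
lemma fQ_nonneg (a N : ℕ) : 0 ≤ fQ m z a N :=
  Finset.sum_nonneg fun n _ => mul_nonneg (fc_nonneg m a n) (pow_nonneg hz0 n)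

include hm hz0 in
lemma fQ_prod (a b N : ℕ) : fQ m z (a+b) N ≤ fQ m z a N * fQ m z b N := by
  have key : fQ m z (a+b) N
      = ∑ n ∈ Finset.range N, ∑ kl ∈ Finset.HasAntidiagonal.antidiagonal n,
          (fc m a kl.1 * z^kl.1) * (fc m b kl.2 * z^kl.2) := by
    unfold fQ
    refine Finset.sum_congr rfl fun n _ => ?_
    rw [← fc_conv m hm n a b, Finset.sum_mul,
      Finset.Nat.sum_antidiagonal_eq_sum_range_succ_mk
        (fun kl => (fc m a kl.1 * z^kl.1) * (fc m b kl.2 * z^kl.2)) n]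
    refine Finset.sum_congr rfl fun i hi => ?_
    have hiN : i ≤ n := by
      have := Finset.mem_range.1 hi; omega
    have : z ^ i * z ^ (n - i) = z ^ n := by
      rw [← pow_add]; congr 1; omega
    calc fc m a i * fc m b (n-i) * z ^ n = fc m a i * fc m b (n-i) * (z^i * z^(n-i)) := by
          rw [this]
      _ = fc m a i * z ^ i * (fc m b (n - i) * z ^ (n - i)) := by ring
  rw [key]
  have hdisj : Set.PairwiseDisjoint ↑(Finset.range N)
      (fun n : ℕ => (Finset.HasAntidiagonal.antidiagonal n : Finset (ℕ × ℕ))) := by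
    intro i _ j _ hij
    simp only [Function.onFun]
    rw [Finset.disjoint_left]
    intro kl h1 h2
    rw [Finset.HasAntidiagonal.mem_antidiagonal] at h1 h2
    exact hij (h1 ▸ h2)
  rw [← Finset.sum_biUnion hdisj]
  have hsub : (Finset.range N).biUnion (fun n => Finset.HasAntidiagonal.antidiagonal n)
      ⊆ Finset.range N ×ˢ Finset.range N := by
    intro kl hkl
    rw [Finset.mem_biUnion] at hkl
    obtain ⟨n, hn, hkln⟩ := hkl
    rw [Finset.HasAntidiagonal.mem_antidiagonal] at hkln
    rw [Finset.mem_product, Finset.mem_range, Finset.mem_range]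
    rw [Finset.mem_range] at hn
    omega
  calc ∑ kl ∈ (Finset.range N).biUnion (fun n => Finset.HasAntidiagonal.antidiagonal n),
        (fc m a kl.1 * z^kl.1) * (fc m b kl.2 * z^kl.2)
      ≤ ∑ kl ∈ Finset.range N ×ˢ Finset.range N,
        (fc m a kl.1 * z^kl.1) * (fc m b kl.2 * z^kl.2) := by
        refine Finset.sum_le_sum_of_subset_of_nonneg hsub fun kl _ _ => ?_
        exact mul_nonneg (mul_nonneg (fc_nonneg _ _ _) (pow_nonneg hz0 _))
          (mul_nonneg (fc_nonneg _ _ _) (pow_nonneg hz0 _))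
    _ = fQ m z a N * fQ m z b N := by
        rw [Finset.sum_product]
        unfold fQ
        rw [Finset.sum_mul_sum]

include hm hz0 in
lemma fQ_le_pow (a N : ℕ) : fQ m z a N ≤ (fQ m z 1 N) ^ a := by
  induction a with
  | zero =>
    simp only [pow_zero]
    rcases Nat.eq_zero_or_pos N with rfl | hN
    · simp [fQ]
    · obtain ⟨N', rfl⟩ : ∃ N', N = N'+1 := ⟨N-1, by omega⟩
      unfold fQ
      rw [Finset.sum_range_succ']
      have : ∀ i ∈ Finset.range N', fc m 0 (i+1) * z^(i+1) = 0 := by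
        intro i _
        rw [fc_zero_left m (i+1) (by omega), zero_mul]
      rw [Finset.sum_congr rfl this]
      simp [fc_zero]
  | succ a iha =>
    calc fQ m z (a+1) N = fQ m z (1+a) N := by rw [Nat.add_comm]
      _ ≤ fQ m z 1 N * fQ m z a N := fQ_prod m z hm hz0 1 a N
      _ ≤ fQ m z 1 N * (fQ m z 1 N)^a :=
          mul_le_mul_of_nonneg_left iha (fQ_nonneg m z hz0 1 N)
      _ = (fQ m z 1 N)^(a+1) := by rw [pow_succ]; ring

end anal

section anal2

variable (m : ℕ) (z : ℝ) (hm : 2 ≤ m) (hz0 : 0 ≤ z)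
  (hz : z * ((m:ℝ)/((m:ℝ)-1))^m ≤ (m:ℝ)/((m:ℝ)-1) - 1)

include hm in
lemma L_ge_one : (1:ℝ) ≤ (m:ℝ)/((m:ℝ)-1) := by
  have h1 : (1:ℝ) ≤ (m:ℝ) - 1 := by
    have : (2:ℝ) ≤ (m:ℝ) := by exact_mod_cast hm
    linarith
  rw [le_div_iff₀ (by linarith)]
  linarith

include hm hz0 in
lemma fQ_one_succ_eq (N : ℕ) : fQ m z 1 (N+1) = 1 + z * fQ m z m N := by
  unfold fQ
  rw [Finset.sum_range_succ']
  have : ∀ i ∈ Finset.range N, fc m 1 (i+1) * z^(i+1) = z * (fc m m i * z^i) := by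
    intro i _
    rw [fc_one_succ m i (by omega), pow_succ]
    ring
  rw [Finset.sum_congr rfl this, ← Finset.mul_sum]
  simp [fc_zero]
  ring

include hm hz0 hz in
lemma fQ_one_le (N : ℕ) : fQ m z 1 N ≤ (m:ℝ)/((m:ℝ)-1) := by
  induction N with
  | zero =>
    simp [fQ]
    linarith [L_ge_one m hm]
  | succ N ih =>
    rw [fQ_one_succ_eq m z hm hz0]
    have h1 : fQ m z m N ≤ (fQ m z 1 N)^m := fQ_le_pow m z (by omega) hz0 m N
    have h2 : (fQ m z 1 N)^m ≤ ((m:ℝ)/((m:ℝ)-1))^m :=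
      pow_le_pow_left₀ (fQ_nonneg m z hz0 1 N) ih m
    have h3 : z * fQ m z m N ≤ z * ((m:ℝ)/((m:ℝ)-1))^m :=
      mul_le_mul_of_nonneg_left (h1.trans h2) hz0
    linarith

include hm hz0 hz in
lemma fsummable (a : ℕ) : Summable (fun n => fc m a n * z^n) := by
  apply summable_of_sum_range_le (c := ((m:ℝ)/((m:ℝ)-1))^a)
  · intro n
    exact mul_nonneg (fc_nonneg m a n) (pow_nonneg hz0 n)
  · intro N
    calc (∑ i ∈ Finset.range N, fc m a i * z^i) = fQ m z a N := rfl
      _ ≤ (fQ m z 1 N)^a := fQ_le_pow m z (by omega) hz0 a N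
      _ ≤ ((m:ℝ)/((m:ℝ)-1))^a :=
          pow_le_pow_left₀ (fQ_nonneg m z hz0 1 N) (fQ_one_le m z hm hz0 hz N) a

include hm hz0 hz in
lemma ft_mul (a b : ℕ) : ft m z a * ft m z b = ft m z (a+b) := by
  unfold ft
  have hsa : Summable (fun n => ‖fc m a n * z^n‖) :=
    (fsummable m z hm hz0 hz a).congr fun n =>
      (Real.norm_of_nonneg (mul_nonneg (fc_nonneg m a n) (pow_nonneg hz0 n))).symm
  have hsb : Summable (fun n => ‖fc m b n * z^n‖) :=
    (fsummable m z hm hz0 hz b).congr fun n =>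
      (Real.norm_of_nonneg (mul_nonneg (fc_nonneg m b n) (pow_nonneg hz0 n))).symm
  rw [tsum_mul_tsum_eq_tsum_sum_antidiagonal_of_summable_norm hsa hsb]
  refine tsum_congr fun n => ?_
  calc (∑ kl ∈ Finset.HasAntidiagonal.antidiagonal n, (fc m a kl.1 * z^kl.1) * (fc m b kl.2 * z^kl.2))
      = ∑ kl ∈ Finset.HasAntidiagonal.antidiagonal n, (fc m a kl.1 * fc m b kl.2) * z^n := by
        refine Finset.sum_congr rfl fun kl hkl => ?_
        have h := Finset.HasAntidiagonal.mem_antidiagonal.1 hkl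
        rw [← h, pow_add]
        ring
    _ = (∑ kl ∈ Finset.HasAntidiagonal.antidiagonal n, fc m a kl.1 * fc m b kl.2) * z^n := by
        rw [Finset.sum_mul]
    _ = fc m (a+b) n * z^n := by
        rw [Finset.Nat.sum_antidiagonal_eq_sum_range_succ_mk
          (fun kl => fc m a kl.1 * fc m b kl.2) n, fc_conv m (by omega) n a b]

lemma ft_zero_eq : ft m z 0 = 1 := by
  unfold ft
  rw [tsum_eq_single 0]
  · simp [fc_zero]
  · intro n hn
    rw [fc_zero_left m n hn, zero_mul]

include hm hz0 hz in
lemma ft_pow (a : ℕ) : (ft m z 1)^a = ft m z a := by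
  induction a with
  | zero => rw [pow_zero, ft_zero_eq]
  | succ a iha =>
    rw [pow_succ, iha, ft_mul m z hm hz0 hz a 1]

include hm hz0 hz in
lemma ft_one_eq : ft m z 1 = 1 + z * ft m z m := by
  unfold ft
  rw [Summable.tsum_eq_zero_add (fsummable m z hm hz0 hz 1)]
  simp only [fc_zero, pow_zero, mul_one, one_mul]
  congr 1
  calc (∑' n : ℕ, fc m 1 (n+1) * z^(n+1))
      = ∑' n : ℕ, z * (fc m m n * z^n) := by
        refine tsum_congr fun n => ?_
        rw [fc_one_succ m n (by omega), pow_succ]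
        ring
    _ = z * ∑' n : ℕ, fc m m n * z^n := tsum_mul_left

include hm hz0 hz in
lemma ft_one_ge : 1 ≤ ft m z 1 := by
  have h := Summable.le_tsum (fsummable m z hm hz0 hz 1) 0
    (fun j _ => mul_nonneg (fc_nonneg m 1 j) (pow_nonneg hz0 j))
  simpa [fc_zero, ft] using h

include hm hz0 hz in
lemma ft_one_le : ft m z 1 ≤ (m:ℝ)/((m:ℝ)-1) :=
  Summable.tsum_le_of_sum_range_le (fsummable m z hm hz0 hz 1) (fQ_one_le m z hm hz0 hz)

end anal2
-- the coefficient identity : (1/((m-1)j+1)) * C(m*j, j) = fc m 1 j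
lemma fc_one_eq (m j : ℕ) (hm : 2 ≤ m) :
    fc m 1 j = (1 / (((m-1)*j + 1 : ℕ) : ℝ)) * (Nat.choose (m*j) j : ℝ) := by
  rcases Nat.eq_zero_or_pos j with rfl | hj
  · simp [fc_zero]
  obtain ⟨e, rfl⟩ : ∃ e, m = e + 1 := ⟨m-1, by omega⟩
  simp only [Nat.add_sub_cancel]
  rw [fc_apos _ 1 j (by omega), show 1 + j*(e+1) = e*j+j+1 by ring,
    show (e+1)*j = e*j+j by ring]
  rw [Nat.cast_choose ℝ (show j ≤ e*j+j+1 by omega), Nat.cast_choose ℝ (show j ≤ e*j+j by omega),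
    show e*j+j+1-j = e*j+1 by omega, show e*j+j-j = e*j by omega,
    show e*j+j+1 = (e*j+j)+1 from rfl, Nat.factorial_succ (e*j+j), Nat.factorial_succ (e*j)]
  have hfj : (0:ℝ) < (Nat.factorial j : ℝ) := by exact_mod_cast Nat.factorial_pos j
  have hfejj : (0:ℝ) < (Nat.factorial (e*j+j) : ℝ) := by exact_mod_cast Nat.factorial_pos (e*j+j)
  have hfej : (0:ℝ) < (Nat.factorial (e*j) : ℝ) := by exact_mod_cast Nat.factorial_pos (e*j)
  push_cast
  field_simp
  ring

lemma pcoef_term (m j : ℕ) (hm : 2 ≤ m) (x : ℝ) :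
    pcoef m ((m-1)*j + 1) * x^((m-1)*j + 1)
      = (((m:ℝ)-1)/m) * x * (fc m 1 j * ((((m:ℝ)-1)/m)^(m-1) * x^(m-1) / m)^j) := by
  have hm1 : 0 < m - 1 := by omega
  have hd : (m-1) ∣ ((m-1)*j + 1 - 1) := by
    simp only [Nat.add_sub_cancel]
    exact dvd_mul_right _ _
  have hq : ((m-1)*j + 1 - 1) / (m-1) = j := by
    simp only [Nat.add_sub_cancel]
    exact Nat.mul_div_cancel_left j hm1
  unfold pcoef
  rw [if_pos hd, hq, fc_one_eq m j hm]
  set c : ℝ := ((m:ℝ)-1)/m with hc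
  have hzj : (c^(m-1) * x^(m-1) / (m:ℝ))^j = c^((m-1)*j) * x^((m-1)*j) * ((1:ℝ)/m)^j := by
    rw [div_pow, mul_pow, ← pow_mul, ← pow_mul, div_pow, one_div, inv_pow, ← one_div]
    ring
  rw [hzj, show (m-1)*j+1 = ((m-1)*j)+1 from rfl, pow_succ c, pow_succ x]
  push_cast
  ring

lemma S_eq (m : ℕ) (hm : 2 ≤ m) (x : ℝ) :
    (∑' k : ℕ, pcoef m (k+1) * x^(k+1))
      = (((m:ℝ)-1)/m) * x
          * ∑' j : ℕ, fc m 1 j * ((((m:ℝ)-1)/m)^(m-1) * x^(m-1) / m)^j := by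
  rw [← tsum_mul_left]
  set c : ℝ := ((m:ℝ)-1)/m with hc
  set z : ℝ := c^(m-1) * x^(m-1) / m with hz
  set f : ℕ → ℝ := fun k => pcoef m (k+1) * x^(k+1) with hf
  set gg : ℕ → ℝ := fun j => c * x * (fc m 1 j * z^j) with hgg
  have key : ∀ j : ℕ, f ((m-1)*j) = gg j := by
    intro j
    have h := pcoef_term m j hm x
    simpa [hf, hgg] using h
  refine tsum_eq_tsum_of_ne_zero_bij (fun j => (m-1) * (j : ℕ)) ?_ ?_ ?_
  · intro j1 j2 h
    have : (j1 : ℕ) = (j2 : ℕ) := Nat.eq_of_mul_eq_mul_left (by omega) h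
    exact Subtype.ext this
  · intro k hk
    have hdvd : (m-1) ∣ k := by
      by_contra hnd
      apply hk
      have : pcoef m (k+1) = 0 := by
        unfold pcoef
        rw [if_neg]
        simpa using hnd
      simp [hf, this]
    obtain ⟨j, rfl⟩ := hdvd
    have hgj : gg j ≠ 0 := by
      rw [← key j]
      exact hk
    exact ⟨⟨j, hgj⟩, rfl⟩
  · intro j
    exact key j


lemma S_prop (m : ℕ) (hm : 2 ≤ m) (x : ℝ) (hx0 : 0 ≤ x) (hx1 : x ≤ 1) :
    0 ≤ (∑' k : ℕ, pcoef m (k+1) * x^(k+1)) ∧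
    (∑' k : ℕ, pcoef m (k+1) * x^(k+1)) ≤ x ∧
    (m:ℝ) * (∑' k : ℕ, pcoef m (k+1) * x^(k+1))
      - (∑' k : ℕ, pcoef m (k+1) * x^(k+1))^m - x*((m:ℝ)-1) = 0 := by
  have hmR : (2:ℝ) ≤ (m:ℝ) := by exact_mod_cast hm
  have hm0 : (m:ℝ) ≠ 0 := by linarith
  have hm1 : (0:ℝ) < (m:ℝ) - 1 := by linarith
  set c : ℝ := ((m:ℝ)-1)/m with hc
  set L : ℝ := (m:ℝ)/((m:ℝ)-1) with hL
  set z : ℝ := c^(m-1) * x^(m-1) / m with hz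
  have hc0 : 0 ≤ c := div_nonneg (by linarith) (by linarith)
  have hz0 : 0 ≤ z := by
    rw [hz]
    exact div_nonneg (mul_nonneg (pow_nonneg hc0 _) (pow_nonneg hx0 _)) (by linarith)
  have hcL : c * L = 1 := by rw [hc, hL]; field_simp
  have hLm : L^(m-1) * L = L^m := by rw [← pow_succ]; congr 1; omega
  have hLdiv : L / (m:ℝ) = L - 1 := by rw [hL]; field_simp; ring
  have hL1 : (0:ℝ) ≤ L - 1 := by
    rw [← hLdiv, hL]
    positivity
  have hzL : z * L^m = x^(m-1) * (L-1) := by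
    have h1 : c^(m-1) * L^(m-1) = 1 := by rw [← mul_pow, hcL, one_pow]
    calc z * L^m = (c^(m-1) * L^(m-1)) * (x^(m-1) * (L / m)) := by
          rw [← hLm, hz]; ring
      _ = x^(m-1) * (L/m) := by rw [h1, one_mul]
      _ = x^(m-1) * (L-1) := by rw [hLdiv]
  have hzhyp : z * L^m ≤ L - 1 := by
    rw [hzL]
    have hx : x^(m-1) ≤ 1 := pow_le_one₀ hx0 hx1
    nlinarith
  set F := ft m z 1 with hF
  have hF1 : 1 ≤ F := ft_one_ge m z hm hz0 hzhyp
  have hFL : F ≤ L := ft_one_le m z hm hz0 hzhyp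
  have hSF : (∑' k : ℕ, pcoef m (k+1) * x^(k+1)) = c * x * F := by
    rw [S_eq m hm x]; rfl
  rw [hSF]
  refine ⟨mul_nonneg (mul_nonneg hc0 hx0) (by linarith), ?_, ?_⟩
  · have h5 : c * F ≤ c * L := mul_le_mul_of_nonneg_left hFL hc0
    calc c*x*F = (c*F)*x := by ring
      _ ≤ (c*L)*x := mul_le_mul_of_nonneg_right (by linarith) hx0
      _ = x := by rw [hcL, one_mul]
  · have hFm : F^m = ft m z m := ft_pow m z hm hz0 hzhyp m
    have hFeq : z * ft m z m = F - 1 := by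
      have h6 := ft_one_eq m z hm hz0 hzhyp
      rw [← hF] at h6
      linarith
    have hcx : (c*x)^m = (m:ℝ) * z * (c * x) := by
      have h3 : (c*x)^(m-1) * (c*x) = (c*x)^m := by rw [← pow_succ]; congr 1; omega
      have h4 : c^(m-1) * x^(m-1) = (m:ℝ) * z := by rw [hz]; field_simp
      rw [← h3, mul_pow, h4]
    have hfin : (c*x*F)^m = (m:ℝ)*c*x*(F-1) := by
      rw [mul_pow, hcx, hFm]
      calc (m:ℝ)*z*(c*x) * ft m z m = (m:ℝ)*(c*x)*(z * ft m z m) := by ring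
        _ = (m:ℝ)*c*x*(F-1) := by rw [hFeq]; ring
    rw [hfin]
    have hmc : (m:ℝ) * c = (m:ℝ)-1 := by rw [hc]; field_simp
    linear_combination x * hmc

/-- If `g : [0,1] → [0,1]` satisfies `m·g(x) − g(x)^m − x(m−1) = 0` with `g(0) = 0`,
then `g` is uniquely determined by this equation and its power series coefficients
are the `pcoef m k`. -/
theorem stationary_generating_function (m : ℕ) (hm : 2 ≤ m) (g : ℝ → ℝ)
    (hmap : ∀ x ∈ Set.Icc (0 : ℝ) 1, g x ∈ Set.Icc (0 : ℝ) 1)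
    (heq : ∀ x ∈ Set.Icc (0 : ℝ) 1, (m : ℝ) * g x - g x ^ m - x * ((m : ℝ) - 1) = 0)
    (h0 : g 0 = 0) :
    (∀ g₂ : ℝ → ℝ, (∀ x ∈ Set.Icc (0 : ℝ) 1, g₂ x ∈ Set.Icc (0 : ℝ) 1) →
      (∀ x ∈ Set.Icc (0 : ℝ) 1, (m : ℝ) * g₂ x - g₂ x ^ m - x * ((m : ℝ) - 1) = 0) →
      g₂ 0 = 0 → ∀ x ∈ Set.Icc (0 : ℝ) 1, g₂ x = g x) ∧
    (∀ x ∈ Set.Icc (0 : ℝ) 1, g x = ∑' k : ℕ, pcoef m (k + 1) * x ^ (k + 1)) := by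
  have hmono : StrictMonoOn (fun y : ℝ => (m:ℝ)*y - y^m) (Set.Icc 0 1) := by
    apply strictMonoOn_of_deriv_pos (convex_Icc 0 1)
    · fun_prop
    · intro y hy
      rw [interior_Icc] at hy
      have h1 : HasDerivAt (fun y : ℝ => (m:ℝ)*y - y^m) ((m:ℝ)*1 - (m:ℝ)*y^(m-1)) y :=
        ((hasDerivAt_id y).const_mul (m:ℝ)).sub (hasDerivAt_pow m y)
      rw [h1.deriv]
      have hy1 : y^(m-1) < 1 := pow_lt_one₀ hy.1.le hy.2 (by omega)
      have hmR : (2:ℝ) ≤ (m:ℝ) := by exact_mod_cast hm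
      nlinarith
  constructor
  · intro g₂ hmap₂ heq₂ _ x hx
    apply hmono.injOn (hmap₂ x hx) (hmap x hx)
    have e1 := heq₂ x hx
    have e2 := heq x hx
    simp only []
    linarith
  · intro x hx
    obtain ⟨hS0, hSx, hSeq⟩ := S_prop m hm x hx.1 hx.2
    apply hmono.injOn (hmap x hx) ⟨hS0, le_trans hSx hx.2⟩
    have e2 := heq x hx
    simp only []
    linarith
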